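/- The graph G = G(Q,S) is connected and has diameter at most 4, i.e., every two vertices of G are at distance at most 4 from each other. -/

import Mathlib

/-- Raw vertex names for the graph `G(Q,S)`: elements `q_i`, hyperedges `S_j`,
copies `S_j'`, subdivision vertices `q^i_j`, and special vertices `q*`, `u₁`, `u₂`, `v`, `w`. -/
inductive HVertex (m n : ℕ) : Type
  | elt : Fin m → HVertex m n
  | hyp : Fin n → HVertex m n
  | copy : Fin n → HVertex m n
  | sub : Fin m → Fin n → HVertex m n
  | qstar : HVertex m n
  | u1 : HVertex m n
  | u2 : HVertex m n
  | v : HVertex m n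
  | w : HVertex m n

/-- A raw vertex name is an actual vertex of `G(Q,S)`: the subdivision vertex `q^i_j`
exists only when `q_i ∈ S_j`. -/
def HVertex.OK {m n : ℕ} (S : Fin n → Set (Fin m)) : HVertex m n → Prop
  | .sub i j => i ∈ S j
  | _ => True

/-- The vertex set of `G(Q,S)`. -/
def GVertex {m n : ℕ} (S : Fin n → Set (Fin m)) : Type := {x : HVertex m n // x.OK S}

/-- The (asymmetrically listed) edges of `G(Q,S)`:
`q^i_j q_i`, `q^i_j S_j`, `q_i S_j'` (for `q_i ∈ S_j`), `S_j S_k'` (all `j,k`),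
`q* u₁`, `q* u₂`, `q* q^i_j`, `u₁ S_j`, `u₂ S_j`, `u₁ v`, `u₂ v`, `w S_j'`. -/
def baseAdj {m n : ℕ} (S : Fin n → Set (Fin m)) : HVertex m n → HVertex m n → Prop
  | .sub i _, .elt i' => i = i'
  | .sub _ j, .hyp j' => j = j'
  | .elt i, .copy j => i ∈ S j
  | .hyp _, .copy _ => True
  | .qstar, .u1 => True
  | .qstar, .u2 => True
  | .qstar, .sub _ _ => True
  | .u1, .hyp _ => True
  | .u2, .hyp _ => True
  | .u1, .v => True
  | .u2, .v => True
  | .w, .copy _ => True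
  | _, _ => False

/-- The graph `G = G(Q,S)`. -/
def GQS {m n : ℕ} (S : Fin n → Set (Fin m)) : SimpleGraph (GVertex S) :=
  SimpleGraph.fromRel (fun a b => baseAdj S a.1 b.1)

namespace Stmt7Aux

variable {m n : ℕ} {S : Fin n → Set (Fin m)}

lemma gadj {a b : GVertex S} (hne : a.1 ≠ b.1) (h : baseAdj S a.1 b.1) :
    (GQS S).Adj a b :=
  ⟨fun e => hne (congrArg Subtype.val e), Or.inl h⟩

-- named vertices
def E (i : Fin m) : GVertex S := ⟨.elt i, trivial⟩
def H (j : Fin n) : GVertex S := ⟨.hyp j, trivial⟩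
def C (j : Fin n) : GVertex S := ⟨.copy j, trivial⟩
def SB (i : Fin m) (j : Fin n) (h : i ∈ S j) : GVertex S := ⟨.sub i j, h⟩
def QS : GVertex S := ⟨.qstar, trivial⟩
def U1 : GVertex S := ⟨.u1, trivial⟩
def U2 : GVertex S := ⟨.u2, trivial⟩
def Vv : GVertex S := ⟨.v, trivial⟩
def W : GVertex S := ⟨.w, trivial⟩

-- adjacency lemmas
lemma adjSE {i j} (h : i ∈ S j) : (GQS S).Adj (SB i j h) (E i) := gadj (by simp [SB, E, H, C, QS, U1, U2, Vv, W]) rfl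
lemma adjSH {i j} (h : i ∈ S j) : (GQS S).Adj (SB i j h) (H j) := gadj (by simp [SB, E, H, C, QS, U1, U2, Vv, W]) rfl
lemma adjEC {i j} (h : i ∈ S j) : (GQS S).Adj (E i) (C j) := gadj (by simp [SB, E, H, C, QS, U1, U2, Vv, W]) h
lemma adjHC {j k : Fin n} : (GQS S).Adj (H j) (C k) := gadj (by simp [SB, E, H, C, QS, U1, U2, Vv, W]) trivial
lemma adjQU1 : (GQS S).Adj (QS (S := S)) U1 := gadj (by simp [SB, E, H, C, QS, U1, U2, Vv, W]) trivial
lemma adjQU2 : (GQS S).Adj (QS (S := S)) U2 := gadj (by simp [SB, E, H, C, QS, U1, U2, Vv, W]) trivial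
lemma adjQSB {i j} (h : i ∈ S j) : (GQS S).Adj QS (SB i j h) := gadj (by simp [SB, E, H, C, QS, U1, U2, Vv, W]) trivial
lemma adjU1H {j} : (GQS S).Adj (U1 (S := S)) (H j) := gadj (by simp [SB, E, H, C, QS, U1, U2, Vv, W]) trivial
lemma adjU2H {j} : (GQS S).Adj (U2 (S := S)) (H j) := gadj (by simp [SB, E, H, C, QS, U1, U2, Vv, W]) trivial
lemma adjU1V : (GQS S).Adj (U1 (S := S)) Vv := gadj (by simp [SB, E, H, C, QS, U1, U2, Vv, W]) trivial
lemma adjU2V : (GQS S).Adj (U2 (S := S)) Vv := gadj (by simp [SB, E, H, C, QS, U1, U2, Vv, W]) trivial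
lemma adjWC {j} : (GQS S).Adj (W (S := S)) (C j) := gadj (by simp [SB, E, H, C, QS, U1, U2, Vv, W]) trivial

lemma walk4 (hn : 2 ≤ n) (hlt : n - 1 < n) (hSlast : S ⟨n - 1, hlt⟩ = Set.univ) :
    ∀ a b : GVertex S, ∃ p : (GQS S).Walk a b, p.length ≤ 4 := by
  set N : Fin n := ⟨n - 1, hlt⟩ with hNdef
  have hN : ∀ i : Fin m, i ∈ S N := by intro i; rw [hSlast]; trivial
  -- walks from qstar, length ≤ 4
  have hq : ∀ b : GVertex S, ∃ p : (GQS S).Walk QS b, p.length ≤ 4 := by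
    rintro ⟨x, hx⟩
    cases x with
    | elt i =>
        exact ⟨.cons (adjQSB (hN i)) (.cons (adjSE (hN i)) .nil), Nat.le_of_ble_eq_true rfl⟩
    | hyp j => exact ⟨.cons adjQU1 (.cons adjU1H .nil), Nat.le_of_ble_eq_true rfl⟩
    | copy k =>
        exact ⟨.cons adjQU1 (.cons (adjU1H (j := N)) (.cons adjHC .nil)), Nat.le_of_ble_eq_true rfl⟩
    | sub i j => exact ⟨.cons (adjQSB hx) .nil, Nat.le_of_ble_eq_true rfl⟩
    | qstar => exact ⟨.nil, Nat.le_of_ble_eq_true rfl⟩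
    | u1 => exact ⟨.cons adjQU1 .nil, Nat.le_of_ble_eq_true rfl⟩
    | u2 => exact ⟨.cons adjQU2 .nil, Nat.le_of_ble_eq_true rfl⟩
    | v => exact ⟨.cons adjQU1 (.cons adjU1V .nil), Nat.le_of_ble_eq_true rfl⟩
    | w =>
        exact ⟨.cons adjQU1 (.cons (adjU1H (j := N))
          (.cons (adjHC (k := N)) (.cons adjWC.symm .nil))), Nat.le_of_ble_eq_true rfl⟩
  -- walks from v, length ≤ 4
  have hv : ∀ b : GVertex S, ∃ p : (GQS S).Walk Vv b, p.length ≤ 4 := by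
    rintro ⟨x, hx⟩
    cases x with
    | elt i =>
        exact ⟨.cons adjU1V.symm (.cons (adjU1H (j := N))
          (.cons (adjSH (hN i)).symm (.cons (adjSE (hN i)) .nil))), Nat.le_of_ble_eq_true rfl⟩
    | hyp j => exact ⟨.cons adjU1V.symm (.cons adjU1H .nil), Nat.le_of_ble_eq_true rfl⟩
    | copy k =>
        exact ⟨.cons adjU1V.symm (.cons (adjU1H (j := N)) (.cons adjHC .nil)), Nat.le_of_ble_eq_true rfl⟩
    | sub i j =>
        exact ⟨.cons adjU1V.symm (.cons adjU1H (.cons (adjSH hx).symm .nil)), Nat.le_of_ble_eq_true rfl⟩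
    | qstar => exact ⟨.cons adjU1V.symm (.cons adjQU1.symm .nil), Nat.le_of_ble_eq_true rfl⟩
    | u1 => exact ⟨.cons adjU1V.symm .nil, Nat.le_of_ble_eq_true rfl⟩
    | u2 => exact ⟨.cons adjU2V.symm .nil, Nat.le_of_ble_eq_true rfl⟩
    | v => exact ⟨.nil, Nat.le_of_ble_eq_true rfl⟩
    | w =>
        exact ⟨.cons adjU1V.symm (.cons (adjU1H (j := N))
          (.cons (adjHC (k := N)) (.cons adjWC.symm .nil))), Nat.le_of_ble_eq_true rfl⟩
  -- walks to the hub C N of length ≤ 2 for all non-(qstar, v) vertices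
  have h1 : ∀ a : GVertex S, a.1 ≠ .qstar → a.1 ≠ .v →
      ∃ p : (GQS S).Walk a (C N), p.length ≤ 2 := by
    rintro ⟨x, hx⟩ hq' hv'
    cases x with
    | elt i => exact ⟨.cons (adjEC (hN i)) .nil, Nat.le_of_ble_eq_true rfl⟩
    | hyp j => exact ⟨.cons adjHC .nil, Nat.le_of_ble_eq_true rfl⟩
    | copy k => exact ⟨.cons (adjHC (j := N)).symm (.cons adjHC .nil), Nat.le_of_ble_eq_true rfl⟩
    | sub i j => exact ⟨.cons (adjSH hx) (.cons adjHC .nil), Nat.le_of_ble_eq_true rfl⟩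
    | qstar => exact absurd rfl hq'
    | u1 => exact ⟨.cons (adjU1H (j := N)) (.cons adjHC .nil), Nat.le_of_ble_eq_true rfl⟩
    | u2 => exact ⟨.cons (adjU2H (j := N)) (.cons adjHC .nil), Nat.le_of_ble_eq_true rfl⟩
    | v => exact absurd rfl hv'
    | w => exact ⟨.cons adjWC .nil, Nat.le_of_ble_eq_true rfl⟩
  intro a b
  by_cases ha : a.1 = HVertex.qstar
  · have : a = QS := Subtype.ext ha
    subst this; exact hq b
  by_cases ha' : a.1 = HVertex.v
  · have : a = Vv := Subtype.ext ha'
    subst this; exact hv b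
  by_cases hb : b.1 = HVertex.qstar
  · have : b = QS := Subtype.ext hb
    subst this
    obtain ⟨p, hp⟩ := hq a
    exact ⟨p.reverse, by simpa using hp⟩
  by_cases hb' : b.1 = HVertex.v
  · have : b = Vv := Subtype.ext hb'
    subst this
    obtain ⟨p, hp⟩ := hv a
    exact ⟨p.reverse, by simpa using hp⟩
  obtain ⟨p, hp⟩ := h1 a ha ha'
  obtain ⟨q, hq2⟩ := h1 b hb hb'
  refine ⟨p.append q.reverse, ?_⟩
  rw [SimpleGraph.Walk.length_append, SimpleGraph.Walk.length_reverse]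
  omega

end Stmt7Aux

theorem stmt_7 {m n : ℕ} (S : Fin n → Set (Fin m)) (hn : 2 ≤ n)
    (hSne : ∀ j, (S j).Nonempty) (hSlast : S ⟨n - 1, by omega⟩ = Set.univ) :
    (GQS S).Connected ∧ ∀ a b : GVertex S, (GQS S).dist a b ≤ 4 := by
  have key := Stmt7Aux.walk4 hn (by omega) hSlast
  haveI : Nonempty (GVertex S) := ⟨Stmt7Aux.QS⟩
  constructor
  · refine ⟨fun a b => ?_⟩
    obtain ⟨p, _⟩ := key a b
    exact ⟨p⟩
  · intro a b
    obtain ⟨p, hp⟩ := key a b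
    exact le_trans (SimpleGraph.dist_le p) hp
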